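/- Let (G, α) be an edge labeled graph over a Prüfer domain R. Then for any vertices u, v, w ∈ V(G), ⋂_{P ∈ P(v,w)} α(P) ⊆ (⋂_{P ∈ P(u,v)} α(P)) + (⋂_{P ∈ P(u,w)} α(P)), where P(a,b) is the set of all paths from a to b and α(P) is the sum of the ideals labeling the edges of P. -/

import Mathlib

open SimpleGraph

/-- A generalized spline on an edge labeled graph. -/
def IsSpline {V R : Type*} [CommRing R] (G : SimpleGraph V)
    (α : Sym2 V → Ideal R) (ρ : V → R) : Prop :=
  ∀ u v : V, G.Adj u v → ρ u - ρ v ∈ α s(u, v)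

/-- The sum of the ideals labeling the edges of a walk. -/
def walkIdealSum {V R : Type*} [CommRing R] (G : SimpleGraph V)
    (α : Sym2 V → Ideal R) {u w : V} (p : G.Walk u w) : Ideal R :=
  (p.edges.map α).sum

/-- The intersection of `α(P)` over all paths `P` from `u` to `w`. -/
def pathsInf {V R : Type*} [CommRing R] (G : SimpleGraph V)
    (α : Sym2 V → Ideal R) (u w : V) : Ideal R :=
  ⨅ (p : G.Walk u w) (_ : p.IsPath), walkIdealSum G α p

/-- The Universal Difference Property. -/
def UDP {V R : Type*} [CommRing R] (G : SimpleGraph V)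
    (α : Sym2 V → Ideal R) : Prop :=
  ∀ u w : V, G.Reachable u w → ∀ x ∈ pathsInf G α u w,
    ∃ ρ : V → R, IsSpline G α ρ ∧ ρ u - ρ w = x

/-- A Prüfer domain: every nonzero finitely generated ideal is invertible. -/
def IsPruferDomain (R : Type*) [CommRing R] [IsDomain R] : Prop :=
  ∀ I : Ideal R, I ≠ ⊥ → I.FG →
    IsUnit (I : FractionalIdeal (nonZeroDivisors R) (FractionRing R))

/-- Key arithmetic lemma in a Prüfer domain. -/
lemma prufer_key {R : Type*} [CommRing R] [IsDomain R] (hR : IsPruferDomain R) (b c : R) :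
    ∃ x y : R, x + y = 1 ∧ x * b ∈ Ideal.span {c} ∧ y * c ∈ Ideal.span {b} := by
  by_cases hb : b = 0
  · exact ⟨1, 0, by ring, by simp [hb], by simp⟩
  by_cases hc : c = 0
  · exact ⟨0, 1, by ring, by simp, by simp [hc]⟩
  set K := FractionRing R
  set f := algebraMap R K with hf
  set I : Ideal R := Ideal.span {b, c} with hIdef
  have hbI : b ∈ I := Ideal.subset_span (by simp)
  have hcI : c ∈ I := Ideal.subset_span (by simp)
  have hI : I ≠ ⊥ := fun h => hb (by simpa [h, Ideal.mem_bot] using hbI)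
  have hfg : I.FG := by classical exact ⟨{b, c}, by simp [hIdef]⟩
  obtain ⟨e, he⟩ := hR I hI hfg
  set J : FractionalIdeal (nonZeroDivisors R) K := ↑e⁻¹ with hJ
  have hIJ : (I : FractionalIdeal (nonZeroDivisors R) K) * J = 1 := by
    rw [← he, hJ]; exact_mod_cast e.mul_inv
  have hmem : (1 : K) ∈ ((I : FractionalIdeal (nonZeroDivisors R) K) * J : FractionalIdeal (nonZeroDivisors R) K) := by
    rw [hIJ]; exact FractionalIdeal.one_mem_one _
  rw [← FractionalIdeal.mem_coe, FractionalIdeal.coe_mul] at hmem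
  have hBX : ∃ X ∈ (J : Submodule R K), ∃ Y ∈ (J : Submodule R K), (1 : K) = f b * X + f c * Y := by
    refine Submodule.mul_induction_on hmem ?_ ?_
    · intro m hm n hn
      rw [FractionalIdeal.mem_coe, FractionalIdeal.mem_coeIdeal] at hm
      obtain ⟨r, hr, hrm⟩ := hm
      obtain ⟨p, q, hpq⟩ := Ideal.mem_span_pair.mp hr
      refine ⟨f p * n, ?_, f q * n, ?_, ?_⟩
      · simpa [Algebra.smul_def] using Submodule.smul_mem (J : Submodule R K) p hn
      · simpa [Algebra.smul_def] using Submodule.smul_mem (J : Submodule R K) q hn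
      · rw [← hrm, ← hpq]; push_cast [map_add, map_mul]; ring
    · rintro z₁ z₂ ⟨X₁, hX₁, Y₁, hY₁, h₁⟩ ⟨X₂, hX₂, Y₂, hY₂, h₂⟩
      exact ⟨X₁ + X₂, add_mem hX₁ hX₂, Y₁ + Y₂, add_mem hY₁ hY₂, by rw [h₁, h₂]; ring⟩
  obtain ⟨X, hX, Y, hY, hone⟩ := hBX
  -- elements of I * J = 1 come from R
  have toR : ∀ r ∈ I, ∀ z ∈ (J : Submodule R K), ∃ t : R, f t = f r * z := by
    intro r hr z hz
    have : f r * z ∈ ((I : FractionalIdeal (nonZeroDivisors R) K) * J : FractionalIdeal (nonZeroDivisors R) K) := by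
      rw [← FractionalIdeal.mem_coe, FractionalIdeal.coe_mul]
      refine Submodule.mul_mem_mul ?_ hz
      rw [FractionalIdeal.mem_coe, FractionalIdeal.mem_coeIdeal]
      exact ⟨r, hr, rfl⟩
    rw [hIJ, FractionalIdeal.mem_one_iff] at this
    exact this
  obtain ⟨x, hx⟩ := toR c hcI Y hY
  obtain ⟨y, hy⟩ := toR b hbI X hX
  have hinj : Function.Injective f := IsFractionRing.injective R K
  refine ⟨x, y, ?_, ?_, ?_⟩
  · apply hinj; rw [map_add, hx, hy, map_one, hone]; ring
  · obtain ⟨t, ht⟩ := toR b hbI Y hY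
    refine Ideal.mem_span_singleton'.mpr ⟨t, hinj ?_⟩
    rw [map_mul, map_mul, hx, ht]; ring
  · obtain ⟨t, ht⟩ := toR c hcI X hX
    refine Ideal.mem_span_singleton'.mpr ⟨t, hinj ?_⟩
    rw [map_mul, map_mul, hy, ht]; ring

/-- Distributivity of sum over intersection in a Prüfer domain. -/
lemma prufer_inf_le {R : Type*} [CommRing R] [IsDomain R] (hR : IsPruferDomain R)
    (A B C : Ideal R) : (A + B) ⊓ (A + C) ≤ A + B ⊓ C := by
  rintro z hz
  obtain ⟨hz1, hz2⟩ := Submodule.mem_inf.mp hz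
  rw [Submodule.add_eq_sup, Submodule.mem_sup] at hz1 hz2
  obtain ⟨a, ha, b, hb, hab⟩ := hz1
  obtain ⟨a', ha', c, hc, hac⟩ := hz2
  obtain ⟨x, y, hxy, hxb, hyc⟩ := prufer_key hR b c
  have hzeq : z = (x * a + y * a') + (x * b + y * c) := by
    have : z = x * z + y * z := by rw [← add_mul, hxy, one_mul]
    rw [this]; nth_rewrite 1 [← hab]; nth_rewrite 1 [← hac]; ring
  rw [Submodule.add_eq_sup, Submodule.mem_sup]
  refine ⟨x * a + y * a', add_mem (A.mul_mem_left x ha) (A.mul_mem_left y ha'),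
    x * b + y * c, Submodule.mem_inf.mpr ⟨?_, ?_⟩, hzeq.symm⟩
  · exact add_mem (B.mul_mem_left x hb) ((Ideal.span_singleton_le_iff_mem B).mpr hb hyc)
  · exact add_mem ((Ideal.span_singleton_le_iff_mem C).mpr hc hxb) (C.mul_mem_left y hc)

section
variable {R : Type*} [CommRing R]

lemma listSum_le_of_subset {ι : Type*} (α : ι → Ideal R) {l l' : List ι}
    (h : l' ⊆ l) : (l'.map α).sum ≤ (l.map α).sum := by
  induction l' with
  | nil => simp
  | cons a t ih =>
    simp only [List.cons_subset] at h
    rw [List.map_cons, List.sum_cons, Submodule.add_eq_sup]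
    refine sup_le ?_ (ih h.2)
    exact List.single_le_sum (fun x _ => zero_le) _ (List.mem_map_of_mem (f := α) h.1)

lemma inf_add_le {ι : Type*} (hd : ∀ A B C : Ideal R, (A + B) ⊓ (A + C) ≤ A + B ⊓ C)
    (C : Ideal R) (f : ι → Ideal R) (s : Finset ι) :
    s.inf (fun i => C + f i) ≤ C + s.inf f := by
  classical
  induction s using Finset.induction with
  | empty => simp [Submodule.add_eq_sup]
  | insert a s hnotmem ih =>
    rw [Finset.inf_insert, Finset.inf_insert]
    calc (C + f a) ⊓ s.inf (fun i => C + f i) ≤ (C + f a) ⊓ (C + s.inf f) :=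
          inf_le_inf_left _ ih
      _ ≤ C + f a ⊓ s.inf f := hd C (f a) (s.inf f)

lemma iInf_add_iInf {ι κ : Type*} [Fintype ι] [Fintype κ]
    (hd : ∀ A B C : Ideal R, (A + B) ⊓ (A + C) ≤ A + B ⊓ C)
    (f : ι → Ideal R) (g : κ → Ideal R) :
    ⨅ (i) (j), (f i + g j) ≤ (⨅ i, f i) + (⨅ j, g j) := by
  have h1 : ∀ (C : Ideal R) (h : κ → Ideal R), ⨅ j, (C + h j) ≤ C + ⨅ j, h j := by
    intro C h
    have := inf_add_le hd C h Finset.univ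
    simpa [Finset.inf_eq_iInf] using this
  have h2 : ∀ (C : Ideal R) (h : ι → Ideal R), ⨅ i, (h i + C) ≤ (⨅ i, h i) + C := by
    intro C h
    simpa [Finset.inf_eq_iInf, add_comm] using inf_add_le hd C h Finset.univ
  calc ⨅ (i) (j), (f i + g j) ≤ ⨅ i, (f i + ⨅ j, g j) :=
        iInf_mono fun i => h1 (f i) g
    _ ≤ (⨅ i, f i) + ⨅ j, g j := h2 _ f
end

theorem prufer_pathsInf_sub {V R : Type*} [Fintype V] [CommRing R] [IsDomain R]
    (hR : IsPruferDomain R) (G : SimpleGraph V) (α : Sym2 V → Ideal R) (u v w : V) :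
    pathsInf G α v w ≤ pathsInf G α u v + pathsInf G α u w := by
  classical
  have key : ∀ (P : G.Path u v) (Q : G.Path u w),
      pathsInf G α v w ≤ walkIdealSum G α P.1 + walkIdealSum G α Q.1 := by
    intro P Q
    set W : G.Walk v w := P.1.reverse.append Q.1 with hW
    have h1 : pathsInf G α v w ≤ walkIdealSum G α W.bypass :=
      iInf_le_of_le W.bypass (iInf_le _ W.bypass_isPath)
    refine h1.trans ?_
    have h2 : walkIdealSum G α W.bypass ≤ walkIdealSum G α W :=
      listSum_le_of_subset α W.edges_bypass_subset
    refine h2.trans_eq ?_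
    simp [walkIdealSum, hW, Walk.edges_append, Walk.edges_reverse, List.map_reverse, List.sum_reverse]
  have hrw : ∀ (a b : V), pathsInf G α a b = ⨅ (p : G.Path a b), walkIdealSum G α p.1 := by
    intro a b
    rw [pathsInf]
    exact iInf_subtype'
  rw [hrw u v, hrw u w]
  refine le_trans (le_iInf fun P => le_iInf fun Q => key P Q) ?_
  exact iInf_add_iInf (prufer_inf_le hR) _ _
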